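/- arXiv:1604.01978 — 2 statements merged into one kernel-verified Lean document; each statement's English description precedes it below -/
import Mathlib

section
/- Let φ(x) = ρ(d(x, D̄)²), where ρ : ℝ₊ → ℝ₊ is C¹, increasing, equal to the identity on [0, 4r₀²] and constant equal to 9r₀² on [9r₀², ∞), and D satisfies the exterior sphere condition (A) with constant r₀. Then for all x, y within distance 2r₀ of D̄, ⟨∇φ(x), x - y⟩ ≥ -2ρ'(d(x,D̄)²)·( ⟨y - π(y), x - π(x)⟩ + (1/(8r₀)) |π(x) - π(y)|² |x - π(x)| ), where π denotes the metric projection onto D̄. -/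
open RealInnerProductSpace

open Metric Filter Set Topology

lemma real_step {dx δv h β ε₂ δ' : ℝ} (hdx : 0 < dx) (hδdx : dx ≤ δv) (hh0 : 0 < h)
    (hβ0 : 0 < β) (hβ1 : β ≤ 1) (hε : ε₂^2 ≤ β*dx^2)
    (hsq : (δv+h)^2 - h*ε₂^2/δv ≤ δ'^2) (hδ'0 : 0 ≤ δ') :
    δv + h - h*β ≤ δ' := by
  have hδv0 : 0 < δv := lt_of_lt_of_le hdx hδdx
  have hdd : dx*dx ≤ δv*δv := mul_le_mul hδdx hδdx hdx.le (by linarith)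
  have h1 : h*ε₂^2/δv ≤ h*β*δv := by
    rw [div_le_iff₀ hδv0]
    nlinarith [mul_le_mul_of_nonneg_left hε hh0.le,
      mul_le_mul_of_nonneg_left hdd (mul_nonneg hh0.le hβ0.le)]
  have ht0 : 0 ≤ δv + h - h*β := by nlinarith
  have h2 : (δv + h - h*β)^2 ≤ δ'^2 := by
    nlinarith [mul_pos (mul_pos hh0 hβ0) hδv0,
      mul_nonneg (mul_nonneg hh0.le hh0.le) (mul_nonneg hβ0.le (by linarith : (0:ℝ) ≤ 2 - β))]
  have := Real.sqrt_le_sqrt h2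
  rwa [Real.sqrt_sq ht0, Real.sqrt_sq hδ'0] at this

lemma endpoint_est {dx S β T₀ P Q : ℝ} (hdx : 0 < dx) (hS : 0 < S) (hβ0 : 0 < β) (hβ1 : β ≤ 1)
    (hT : T₀ = dx + S) (hP0 : 0 ≤ P) (hP : P ≤ S^2)
    (hcon : (T₀ - S*β)^2 ≤ P + 2*Q + dx^2) :
    P - 2*(S/dx)*Q + (S/dx)^2*dx^2 ≤ 2*T₀*S^2*β/dx := by
  subst hT
  have key : dx*(P - 2*(S/dx)*Q + (S/dx)^2*dx^2) ≤ dx*(2*(dx+S)*S^2*β/dx) := by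
    have e1 : dx*(P - 2*(S/dx)*Q + (S/dx)^2*dx^2) = dx*P - 2*S*Q + S^2*dx := by
      field_simp
    have e2 : dx*(2*(dx+S)*S^2*β/dx) = 2*(dx+S)*S^2*β := by field_simp
    rw [e1, e2]
    nlinarith [mul_le_mul_of_nonneg_left hcon hS.le,
      mul_le_mul_of_nonneg_left hP (by linarith : (0:ℝ) ≤ dx + S),
      mul_nonneg (mul_nonneg hS.le (mul_nonneg hS.le hS.le)) (mul_nonneg hβ0.le hβ0.le)]
  exact le_of_mul_le_mul_left key hdx

lemma step_geom {d : ℕ} (u z z' : EuclideanSpace ℝ (Fin d)) {δv h : ℝ}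
    (hδpos : 0 < δv) (huz : ‖u - z‖ = δv) (hh0 : 0 < h)
    (hlow : δv ≤ ‖u - z'‖) :
    (δv + h)^2 - h*‖z - z'‖^2/δv ≤ ‖(u + h • (‖u - z‖⁻¹ • (u - z))) - z'‖^2 := by
  have huznz : ‖u - z‖ ≠ 0 := by rw [huz]; exact ne_of_gt hδpos
  set m : EuclideanSpace ℝ (Fin d) := ‖u - z‖⁻¹ • (u - z) with hmdef
  have hmn : ‖m‖ = 1 := by
    rw [hmdef, norm_smul, norm_inv, norm_norm, inv_mul_cancel₀ huznz]
  have hsplit2 : u - z' = (z - z') + δv • m := by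
    rw [hmdef, smul_smul, huz, mul_inv_cancel₀ (huz ▸ huznz), one_smul]
    abel
  set I := ⟪z - z', m⟫ with hIdef
  set Z := ‖z - z'‖^2 with hZdef
  have hZ0 : 0 ≤ Z := by rw [hZdef]; positivity
  have e : ‖u - z'‖^2 = Z + 2*δv*I + δv^2 := by
    rw [hsplit2, norm_add_sq_real, real_inner_smul_right, norm_smul,
      Real.norm_eq_abs, abs_of_pos hδpos, hmn]
    ring
  have hI : -(h*Z/δv) ≤ 2*h*I := by
    have h2 : -Z ≤ 2*δv*I := by nlinarith [sq_nonneg ‖u - z'‖]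
    rw [neg_le, ← neg_mul, ← neg_mul, le_div_iff₀ hδpos]
    calc -2*h*I*δv = h*(-(2*δv*I)) := by ring
      _ ≤ h*Z := by nlinarith [mul_le_mul_of_nonneg_left h2 hh0.le]
  have hsplit : (u + h • m) - z' = (u - z') + h • m := by abel
  have hexp : ‖(u + h • m) - z'‖^2 = ‖u - z'‖^2 + 2*h*(δv + I) + h^2 := by
    rw [hsplit, norm_add_sq_real, real_inner_smul_right, norm_smul,
      Real.norm_eq_abs, abs_of_pos hh0, hmn]
    have : ⟪u - z', m⟫ = δv + I := by
      rw [hsplit2, inner_add_left, real_inner_smul_left, real_inner_self_eq_norm_sq, hmn, hIdef]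
      ring
    rw [this]
    ring
  have hq : δv^2 ≤ ‖u - z'‖^2 := by nlinarith
  rw [hexp]
  nlinarith [hI, hq]

lemma div_bound {c2 I μ dx T₀ : ℝ} (hdx : 0 < dx) (hμ : 0 < μ) (hT : μ*dx = T₀)
    (h0 : 0 ≤ c2 + 2*μ*I) : -(dx/(2*T₀))*c2 ≤ I := by
  subst hT
  rw [neg_mul, neg_le]
  have h2 : dx/(2*(μ*dx)) = 1/(2*μ) := by
    rw [div_eq_div_iff (by positivity) (by positivity)]
    ring
  rw [h2, div_mul_eq_mul_div, one_mul, le_div_iff₀ (by positivity)]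
  nlinarith only [h0, hμ]

lemma rho_deriv_one {r₀ : ℝ} (hr₀ : 0 < r₀) (ρ ρ' : ℝ → ℝ)
    (hρ_deriv : ∀ s, HasDerivAt ρ (ρ' s) s)
    (hρ_id : ∀ s ∈ Set.Icc (0 : ℝ) (4 * r₀ ^ 2), ρ s = s)
    {s₀ : ℝ} (h0 : 0 ≤ s₀) (h4 : s₀ < 4 * r₀ ^ 2) : ρ' s₀ = 1 := by
  have h1 := hasDerivAt_iff_tendsto_slope.mp (hρ_deriv s₀)
  have h2 : Tendsto (slope ρ s₀) (𝓝[>] s₀) (𝓝 (ρ' s₀)) :=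
    h1.mono_left (nhdsWithin_mono _ (fun t ht => ne_of_gt ht))
  have h3 : slope ρ s₀ =ᶠ[𝓝[>] s₀] fun _ => (1:ℝ) := by
    filter_upwards [Ioc_mem_nhdsGT_of_mem
      (show s₀ ∈ Set.Ico s₀ (4*r₀^2) from ⟨le_rfl, h4⟩)] with t ht
    have hts : ρ t = t := hρ_id t ⟨le_trans h0 ht.1.le, ht.2⟩
    have hss : ρ s₀ = s₀ := hρ_id s₀ ⟨h0, by linarith⟩
    rw [slope_def_field, hts, hss]
    exact div_self (sub_ne_zero.mpr (ne_of_gt ht.1))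
  have h4' : Tendsto (fun _ : ℝ => (1:ℝ)) (𝓝[>] s₀) (𝓝 (ρ' s₀)) := h2.congr' h3
  exact (tendsto_nhds_unique h4' tendsto_const_nhds).symm ▸ rfl

lemma pi_continuousOn {d : ℕ} {K : Set (EuclideanSpace ℝ (Fin d))} (hKc : IsClosed K) {r₀ : ℝ}
    {π : EuclideanSpace ℝ (Fin d) → EuclideanSpace ℝ (Fin d)}
    (hmem : ∀ w, infDist w K < 4*r₀ → π w ∈ K)
    (hdist : ∀ w, infDist w K < 4*r₀ → dist w (π w) = infDist w K)
    (huniq : ∀ w, infDist w K < 4*r₀ → ∀ z ∈ K, dist w z = infDist w K → z = π w) :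
    ContinuousOn π {w | infDist w K < 4*r₀} := by
  have hopen : IsOpen {w | infDist w K < 4*r₀} :=
    isOpen_lt (continuous_infDist_pt K) continuous_const
  intro w hw
  refine ContinuousAt.continuousWithinAt ?_
  have hw' : infDist w K < 4*r₀ := hw
  apply Filter.tendsto_of_subseq_tendsto
  intro ns hns
  have e1 : ∀ᶠ n in atTop, ns n ∈ Metric.closedBall w 1 :=
    hns (Metric.closedBall_mem_nhds w zero_lt_one)
  have e2 : ∀ᶠ n in atTop, ns n ∈ {w | infDist w K < 4*r₀} := hns (hopen.mem_nhds hw)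
  obtain ⟨N₀, hN₀⟩ := (e1.and e2).exists_forall_of_atTop
  set y : ℕ → EuclideanSpace ℝ (Fin d) := fun n => ns (n + N₀) with hy
  have hyd : ∀ n, dist (y n) w ≤ 1 ∧ infDist (y n) K < 4*r₀ := by
    intro n
    have := hN₀ (n + N₀) (Nat.le_add_left _ _)
    exact ⟨this.1, this.2⟩
  have hytend : Tendsto y atTop (𝓝 w) := hns.comp (tendsto_add_atTop_nat N₀)
  have hybd : ∀ n, π (y n) ∈ Metric.closedBall w (4*r₀ + 1) := by
    intro n
    have h1 := (hyd n).1
    have h2 := (hyd n).2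
    have h3 : dist (y n) (π (y n)) = infDist (y n) K := hdist _ h2
    have : dist (π (y n)) w ≤ dist (π (y n)) (y n) + dist (y n) w := dist_triangle _ _ _
    rw [dist_comm (π (y n)) (y n)] at this
    simp only [Metric.mem_closedBall]
    calc dist (π (y n)) w ≤ infDist (y n) K + dist (y n) w := by rw [← h3]; exact this
      _ ≤ 4*r₀ + 1 := add_le_add h2.le h1
  obtain ⟨a, _, φ, hφmono, hφtend⟩ :=
    tendsto_subseq_of_bounded (Metric.isBounded_closedBall (x := w) (r := 4*r₀+1)) hybd
  have haK : a ∈ K := hKc.mem_of_tendsto hφtend (Filter.Eventually.of_forall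
    (fun n => hmem _ (hyd (φ n)).2))
  have hyφ : Tendsto (y ∘ φ) atTop (𝓝 w) := hytend.comp hφmono.tendsto_atTop
  have hda : Tendsto (fun n => dist (y (φ n)) (π (y (φ n)))) atTop (𝓝 (dist w a)) :=
    hyφ.dist hφtend
  have hdi : Tendsto (fun n => dist (y (φ n)) (π (y (φ n)))) atTop (𝓝 (infDist w K)) := by
    have : Tendsto (fun n => infDist (y (φ n)) K) atTop (𝓝 (infDist w K)) :=
      ((continuous_infDist_pt K).tendsto w).comp hyφ
    exact this.congr (fun n => (hdist _ (hyd (φ n)).2).symm)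
  have hwa : dist w a = infDist w K := tendsto_nhds_unique hda hdi
  have : a = π w := huniq w hw' a haK hwa
  refine ⟨fun n => φ n + N₀, ?_⟩
  rw [← this]
  exact hφtend

set_option maxHeartbeats 2000000 in
theorem ray_lemma {d : ℕ} {K : Set (EuclideanSpace ℝ (Fin d))} (hKc : IsClosed K) {r₀ : ℝ}
    (hr₀ : 0 < r₀)
    {π : EuclideanSpace ℝ (Fin d) → EuclideanSpace ℝ (Fin d)}
    (hmem : ∀ w, infDist w K < 4*r₀ → π w ∈ K)
    (hdist : ∀ w, infDist w K < 4*r₀ → dist w (π w) = infDist w K)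
    (huniq : ∀ w, infDist w K < 4*r₀ → ∀ z ∈ K, dist w z = infDist w K → z = π w)
    (x : EuclideanSpace ℝ (Fin d)) (hx0 : 0 < Metric.infDist x K) {T₀ : ℝ}
    (hT1 : Metric.infDist x K < T₀) (hT2 : T₀ < 4*r₀) :
    T₀ ≤ Metric.infDist (π x + (T₀ / Metric.infDist x K) • (x - π x)) K := by
  set dx := Metric.infDist x K with hdxdef
  set p := π x with hpdef
  set S := T₀ - dx with hSdef
  set v := x - p with hvdef
  set cT := p + (T₀ / dx) • v with hcTdef
  clear_value dx p S v cT
  have hx4 : dx < 4*r₀ := hT1.trans hT2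
  have hx4' : Metric.infDist x K < 4*r₀ := by rw [← hdxdef]; exact hx4
  have hpK : p ∈ K := by rw [hpdef]; exact hmem x hx4'
  have hS0 : 0 < S := by rw [hSdef]; linarith
  have hT₀0 : 0 < T₀ := hx0.trans hT1
  have hS4 : S ≤ 4*r₀ := by rw [hSdef]; linarith
  have hvn : ‖v‖ = dx := by
    rw [hvdef, hpdef, ← dist_eq_norm, hdxdef]; exact hdist x hx4'
  set C := Metric.closedBall x (4*r₀) ∩ {w | infDist w K ≤ T₀} with hCdef
  clear_value C
  have hCcomp : IsCompact C := by
    rw [hCdef]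
    exact (isCompact_closedBall x _).inter_right
      (isClosed_le (continuous_infDist_pt K) continuous_const)
  have hCsub : C ⊆ {w | infDist w K < 4*r₀} := by
    rw [hCdef]; exact fun w hw => lt_of_le_of_lt hw.2 hT2
  have hCmem : ∀ w', ‖w' - x‖ ≤ 4*r₀ → infDist w' K ≤ T₀ → w' ∈ C := by
    rw [hCdef]
    intro w' h1 h2
    exact ⟨by simpa [Metric.mem_closedBall, dist_eq_norm] using h1, h2⟩
  have huc := Metric.uniformContinuousOn_iff.mp
    (hCcomp.uniformContinuousOn_of_continuous
      ((pi_continuousOn hKc hmem hdist huniq).mono hCsub))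
  have key : ∀ ε₂ : ℝ, ε₂ ∈ Set.Ioc (0:ℝ) dx →
      T₀ - S*(ε₂^2/dx^2) - Real.sqrt (2*T₀*S^2*(ε₂^2/dx^2)/dx) ≤ infDist cT K := by
    rintro ε₂ ⟨hε₂0, hε₂dx⟩
    set β := ε₂^2/dx^2 with hβdef
    clear_value β
    have hdx2 : (0:ℝ) < dx^2 := pow_pos hx0 2
    have hβ0 : 0 < β := by rw [hβdef]; exact div_pos (pow_pos hε₂0 2) hdx2
    have hβ1 : β ≤ 1 := by
      rw [hβdef, div_le_one hdx2]
      nlinarith only [mul_self_le_mul_self hε₂0.le hε₂dx]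
    have hβdx : ε₂^2 = β*dx^2 := by rw [hβdef]; field_simp
    obtain ⟨η, hη0, hucη⟩ := huc ε₂ hε₂0
    obtain ⟨N, hN⟩ := exists_nat_gt (S/η)
    have hN0 : 0 < (N:ℝ) := lt_trans (div_pos hS0 hη0) hN
    set h := S/(N:ℝ) with hhdef
    clear_value h
    have hh0 : 0 < h := by rw [hhdef]; exact div_pos hS0 hN0
    have hhη : h < η := by
      rw [hhdef, div_lt_iff₀ hN0]
      calc S = (S/η)*η := by field_simp
        _ < (N:ℝ)*η := mul_lt_mul_of_pos_right hN hη0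
        _ = η*(N:ℝ) := mul_comm _ _
    have hNh : (N:ℝ)*h = S := by
      rw [hhdef]; field_simp
    set step : EuclideanSpace ℝ (Fin d) → EuclideanSpace ℝ (Fin d) :=
      fun u => u + h • (‖u - π u‖⁻¹ • (u - π u)) with hstepdef
    set w : ℕ → EuclideanSpace ℝ (Fin d) := fun k => step^[k] x with hwdef
    have hw0 : w 0 = x := rfl
    have hwsucc : ∀ k : ℕ, w (k+1) = w k + h • (‖w k - π (w k)‖⁻¹ • (w k - π (w k))) := by
      intro k
      have h1 : w (k+1) = step (w k) := Function.iterate_succ_apply' step k x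
      rw [h1]
    clear_value step w
    clear hstepdef hwdef
    have claim : ∀ k : ℕ, k ≤ N → ‖w k - x‖ ≤ k*h ∧ infDist (w k) K ≤ dx + k*h ∧
        dx + k*h*(1-β) ≤ infDist (w k) K := by
      intro k
      induction k with
      | zero =>
        intro _
        refine ⟨?_, ?_, ?_⟩ <;> rw [hw0] <;> simp [← hdxdef]
      | succ k ih =>
        intro hk1
        obtain ⟨ihx, ihup, ihlow⟩ := ih (Nat.le_of_succ_le hk1)
        have hkh0 : 0 ≤ (k:ℝ)*h := mul_nonneg (Nat.cast_nonneg k) hh0.le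
        have hkhb0 : 0 ≤ (k:ℝ)*h*(1-β) := mul_nonneg hkh0 (by linarith)
        have hδdx : dx ≤ infDist (w k) K := by linarith
        have hδpos : 0 < infDist (w k) K := hx0.trans_le hδdx
        have hkN : (k:ℝ) ≤ (N:ℝ) := by exact_mod_cast Nat.le_of_succ_le hk1
        have hk1N : (k:ℝ)+1 ≤ (N:ℝ) := by exact_mod_cast hk1
        have hkhS : ((k:ℝ)+1)*h ≤ S := by
          rw [← hNh]
          exact mul_le_mul_of_nonneg_right hk1N hh0.le
        have hkhS' : (k:ℝ)*h ≤ S := by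
          rw [← hNh]
          exact mul_le_mul_of_nonneg_right hkN hh0.le
        have hδT : infDist (w k) K ≤ T₀ := by
          rw [hSdef] at hkhS'; linarith
        have hδ4 : infDist (w k) K < 4*r₀ := lt_of_le_of_lt hδT hT2
        have hzK : π (w k) ∈ K := hmem _ hδ4
        have huz : ‖w k - π (w k)‖ = infDist (w k) K := by
          rw [← dist_eq_norm]; exact hdist _ hδ4
        have hw1 := hwsucc k
        have hdistu' : dist (w (k+1)) (w k) = h := by
          rw [hw1, dist_eq_norm]
          have e0 : w k + h • (‖w k - π (w k)‖⁻¹ • (w k - π (w k))) - w k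
              = h • (‖w k - π (w k)‖⁻¹ • (w k - π (w k))) := by abel
          rw [e0, norm_smul, norm_smul, norm_inv, norm_norm,
            inv_mul_cancel₀ (by rw [huz]; exact ne_of_gt hδpos),
            Real.norm_eq_abs, abs_of_pos hh0, mul_one]
        have ha : ‖w (k+1) - x‖ ≤ ((k:ℝ)+1)*h := by
          have h1 : ‖w (k+1) - x‖ ≤ ‖w (k+1) - w k‖ + ‖w k - x‖ :=
            norm_sub_le_norm_sub_add_norm_sub _ _ _
          have e : ‖w (k+1) - w k‖ = h := by rw [← dist_eq_norm]; exact hdistu'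
          rw [e] at h1
          linarith only [h1, ihx]
        have hb : infDist (w (k+1)) K ≤ dx + ((k:ℝ)+1)*h := by
          have h1 := Metric.infDist_le_infDist_add_dist (x := w (k+1)) (y := w k) (s := K)
          rw [hdistu'] at h1
          linarith only [h1, ihup]
        have hu'T : infDist (w (k+1)) K ≤ T₀ := by
          rw [hSdef] at hkhS; linarith
        have hu'4 : infDist (w (k+1)) K < 4*r₀ := lt_of_le_of_lt hu'T hT2
        have hmemu : w k ∈ C := hCmem _ (by linarith) hδT
        have hmemu' : w (k+1) ∈ C := hCmem _ (by linarith) hu'T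
        have hz'K : π (w (k+1)) ∈ K := hmem _ hu'4
        have hzz' : ‖π (w k) - π (w (k+1))‖ ≤ ε₂ := by
          rw [← dist_eq_norm]
          exact (hucη _ hmemu _ hmemu' (by rw [dist_comm, hdistu']; exact hhη)).le
        have hu'z' : ‖w (k+1) - π (w (k+1))‖ = infDist (w (k+1)) K := by
          rw [← dist_eq_norm]; exact hdist _ hu'4
        have hlowz' : infDist (w k) K ≤ ‖w k - π (w (k+1))‖ := by
          rw [← dist_eq_norm]
          exact Metric.infDist_le_dist_of_mem hz'K
        have hstep := step_geom (w k) (π (w k)) (π (w (k+1))) hδpos huz hh0 hlowz'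
        rw [← hw1, hu'z'] at hstep
        have hsq : (infDist (w k) K + h)^2 - h*ε₂^2/(infDist (w k) K)
            ≤ infDist (w (k+1)) K ^2 := by
          have h5' : ‖π (w k) - π (w (k+1))‖^2 ≤ ε₂^2 := by
            nlinarith only [hzz', norm_nonneg (π (w k) - π (w (k+1)))]
          have h5 : h*‖π (w k) - π (w (k+1))‖^2 ≤ h*ε₂^2 :=
            mul_le_mul_of_nonneg_left h5' hh0.le
          have h6 : h*‖π (w k) - π (w (k+1))‖^2/(infDist (w k) K)
              ≤ h*ε₂^2/(infDist (w k) K) := by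
            gcongr
          linarith only [hstep, h6]
        have hc' : infDist (w k) K + h - h*β ≤ infDist (w (k+1)) K :=
          real_step hx0 hδdx hh0 hβ0 hβ1 (le_of_eq hβdx) hsq Metric.infDist_nonneg
        refine ⟨?_, ?_, ?_⟩
        · push_cast; exact ha
        · push_cast; exact hb
        · push_cast; linarith only [ihlow, hc']
    obtain ⟨hWx, hWup, hWlow⟩ := claim N (le_refl N)
    rw [hNh] at hWx hWlow
    have hWlow' : T₀ - S*β ≤ infDist (w N) K := by linarith only [hSdef, hWlow]
    have hWp : w N - p = (w N - x) + v := by rw [hvdef]; abel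
    have hWcT : w N - cT = (w N - x) - (S/dx) • v := by
      rw [hcTdef]
      have e1 : (T₀/dx) • v = (1:ℝ) • v + (S/dx) • v := by
        rw [← add_smul]
        congr 1
        rw [hSdef]
        field_simp
        ring
      rw [e1, one_smul, hvdef]
      abel
    have hWpn : T₀ - S*β ≤ ‖w N - p‖ := by
      have h1 : infDist (w N) K ≤ dist (w N) p := Metric.infDist_le_dist_of_mem hpK
      rw [dist_eq_norm] at h1
      linarith
    have hTSβ : 0 < T₀ - S*β := by
      linarith only [hSdef, hx0, mul_le_mul_of_nonneg_left hβ1 hS0.le]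
    have hP : ‖w N - x‖^2 ≤ S^2 := by nlinarith only [hWx, norm_nonneg (w N - x)]
    have hcon : (T₀ - S*β)^2 ≤ ‖w N - x‖^2 + 2*⟪w N - x, v⟫ + dx^2 := by
      have e : ‖(w N - x) + v‖^2 = ‖w N - x‖^2 + 2*⟪w N - x, v⟫ + dx^2 := by
        rw [norm_add_sq_real, hvn]
      rw [← e, ← hWp]
      nlinarith only [mul_self_le_mul_self hTSβ.le hWpn]
    have hgoal2 : ‖w N - cT‖^2 ≤ 2*T₀*S^2*β/dx := by
      have e : ‖w N - cT‖^2 = ‖w N - x‖^2 - 2*(S/dx)*⟪w N - x, v⟫ + (S/dx)^2*dx^2 := by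
        rw [hWcT, norm_sub_sq_real, real_inner_smul_right, norm_smul, hvn,
          Real.norm_eq_abs, abs_of_pos (div_pos hS0 hx0)]
        ring
      rw [e]
      exact endpoint_est hx0 hS0 hβ0 hβ1 (by rw [hSdef]; ring) (sq_nonneg _) hP hcon
    have hy0 : 0 ≤ 2*T₀*S^2*β/dx :=
      div_nonneg (mul_nonneg (mul_nonneg (by linarith) (sq_nonneg S)) hβ0.le) hx0.le
    have hdcT : dist (w N) cT ≤ Real.sqrt (2*T₀*S^2*β/dx) := by
      rw [dist_eq_norm]
      exact (Real.le_sqrt (norm_nonneg _) hy0).mpr hgoal2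
    have hfin := Metric.infDist_le_infDist_add_dist (x := w N) (y := cT) (s := K)
    linarith only [hWlow', hfin, hdcT]
  set F : ℝ → ℝ := fun e => T₀ - S*(e^2/dx^2) - Real.sqrt (2*T₀*S^2*(e^2/dx^2)/dx) with hFdef
  have hFc : Continuous F := by
    rw [hFdef]
    apply Continuous.sub
    · exact continuous_const.sub (continuous_const.mul ((continuous_pow 2).div_const _))
    · exact Real.continuous_sqrt.comp
        ((continuous_const.mul ((continuous_pow 2).div_const _)).div_const _)
  have hF0 : F 0 = T₀ := by
    rw [hFdef]
    simp [Real.sqrt_zero]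
  have htend : Tendsto F (𝓝[>] (0:ℝ)) (𝓝 T₀) := by
    rw [← hF0]
    exact (hFc.tendsto 0).mono_left nhdsWithin_le_nhds
  refine le_of_tendsto htend ?_
  filter_upwards [Ioc_mem_nhdsGT_of_mem (show (0:ℝ) ∈ Set.Ico 0 dx from ⟨le_rfl, hx0⟩)] with e he
  simp only [hFdef]
  exact key e he

theorem key_normal_ineq {d : ℕ} {K : Set (EuclideanSpace ℝ (Fin d))} (hKc : IsClosed K) {r₀ : ℝ}
    (hr₀ : 0 < r₀)
    {π : EuclideanSpace ℝ (Fin d) → EuclideanSpace ℝ (Fin d)}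
    (hmem : ∀ w, infDist w K < 4*r₀ → π w ∈ K)
    (hdist : ∀ w, infDist w K < 4*r₀ → dist w (π w) = infDist w K)
    (huniq : ∀ w, infDist w K < 4*r₀ → ∀ z ∈ K, dist w z = infDist w K → z = π w)
    (x : EuclideanSpace ℝ (Fin d)) (hx4 : Metric.infDist x K < 4*r₀)
    (z : EuclideanSpace ℝ (Fin d)) (hzK : z ∈ K) :
    -(1/(8*r₀)) * ‖π x - z‖^2 * ‖x - π x‖ ≤ ⟪x - π x, π x - z⟫ := by
  rcases eq_or_lt_of_le (Metric.infDist_nonneg (x := x) (s := K)) with h0 | hx0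
  · -- x = π x
    have hx : dist x (π x) = 0 := by rw [hdist x hx4, ← h0]
    have hxp : x - π x = 0 := by
      rw [dist_eq_norm] at hx
      exact norm_eq_zero.mp hx
    rw [hxp]
    simp
  · have hdx4 : Metric.infDist x K < 4*r₀ := hx4
    have hTb : ∀ T₀ : ℝ, T₀ ∈ Set.Ioo (Metric.infDist x K) (4*r₀) →
        -(Metric.infDist x K/(2*T₀))*‖π x - z‖^2 ≤ ⟪x - π x, π x - z⟫ := by
      rintro T₀ ⟨hT1, hT2⟩
      have hray := ray_lemma hKc hr₀ hmem hdist huniq x hx0 hT1 hT2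
      have hzd : T₀ ≤ ‖(π x - z) + (T₀/Metric.infDist x K) • (x - π x)‖ := by
        have h1 : Metric.infDist (π x + (T₀ / Metric.infDist x K) • (x - π x)) K
            ≤ dist (π x + (T₀ / Metric.infDist x K) • (x - π x)) z :=
          Metric.infDist_le_dist_of_mem hzK
        rw [dist_eq_norm] at h1
        have e : π x + (T₀ / Metric.infDist x K) • (x - π x) - z
            = (π x - z) + (T₀/Metric.infDist x K) • (x - π x) := by abel
        rw [e] at h1
        linarith only [hray, h1]
      set μ := T₀/Metric.infDist x K with hμdef
      have hμ0 : 0 < μ := div_pos (hx0.trans hT1) hx0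
      have hvn : ‖x - π x‖ = Metric.infDist x K := by
        rw [← dist_eq_norm]; exact hdist x hx4
      have hμdx : μ * Metric.infDist x K = T₀ := by
        rw [hμdef]; field_simp
      have hsq : T₀^2 ≤ ‖π x - z‖^2 + 2*μ*⟪π x - z, x - π x⟫ + T₀^2 := by
        have e2 : ‖(π x - z) + μ • (x - π x)‖^2
            = ‖π x - z‖^2 + 2*μ*⟪π x - z, x - π x⟫ + T₀^2 := by
          rw [norm_add_sq_real, real_inner_smul_right, norm_smul, hvn,
            Real.norm_eq_abs, abs_of_pos hμ0]
          rw [mul_pow, ← hμdx]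
          ring
        rw [← e2]
        calc T₀^2 ≤ ‖(π x - z) + μ • (x - π x)‖^2 := by
              nlinarith only [hzd, norm_nonneg ((π x - z) + μ • (x - π x)),
                (hx0.trans hT1)]
          _ = _ := rfl
      have h0 : 0 ≤ ‖π x - z‖^2 + 2*μ*⟪π x - z, x - π x⟫ := by linarith only [hsq]
      have := div_bound hx0 hμ0 hμdx h0
      rw [real_inner_comm] at this
      exact this
    -- limit T₀ → 4 r₀
    have hcont : ContinuousAt
        (fun T : ℝ => -(Metric.infDist x K/(2*T))*‖π x - z‖^2) (4*r₀) := by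
      apply ContinuousAt.mul ?_ continuousAt_const
      apply ContinuousAt.neg
      exact ContinuousAt.div continuousAt_const
        (continuousAt_const.mul continuousAt_id) (by positivity)
    have htend : Tendsto (fun T : ℝ => -(Metric.infDist x K/(2*T))*‖π x - z‖^2)
        (𝓝[<] (4*r₀)) (𝓝 (-(Metric.infDist x K/(2*(4*r₀)))*‖π x - z‖^2)) :=
      hcont.tendsto.mono_left nhdsWithin_le_nhds
    have hle : -(Metric.infDist x K/(2*(4*r₀)))*‖π x - z‖^2 ≤ ⟪x - π x, π x - z⟫ := by
      refine le_of_tendsto htend ?_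
      filter_upwards [Ioo_mem_nhdsLT_of_mem
        (show (4*r₀) ∈ Set.Ioc (Metric.infDist x K) (4*r₀) from ⟨hx4, le_rfl⟩)] with T hT
      exact hTb T hT
    calc -(1/(8*r₀)) * ‖π x - z‖^2 * ‖x - π x‖
        = -(Metric.infDist x K/(2*(4*r₀)))*‖π x - z‖^2 := by
          rw [show ‖x - π x‖ = Metric.infDist x K from by
            rw [← dist_eq_norm]; exact hdist x hx4]
          ring
      _ ≤ _ := hle

theorem gradient_penalty_function_inequality {d : ℕ}
    (D : Set (EuclideanSpace ℝ (Fin d))) (r₀ : ℝ) (hr₀ : 0 < r₀)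
    (π : EuclideanSpace ℝ (Fin d) → EuclideanSpace ℝ (Fin d))
    (hπ_mem : ∀ w, Metric.infDist w (closure D) < 4 * r₀ → π w ∈ closure D)
    (hπ_dist : ∀ w, Metric.infDist w (closure D) < 4 * r₀ →
      dist w (π w) = Metric.infDist w (closure D))
    (hπ_unique : ∀ w, Metric.infDist w (closure D) < 4 * r₀ →
      ∀ z ∈ closure D, dist w z = Metric.infDist w (closure D) → z = π w)
    -- condition (A) and its one-sided quadratic consequence
    (hA : ∀ p ∈ frontier D, ∀ m : EuclideanSpace ℝ (Fin d), ‖m‖ = 1 →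
      Metric.ball (p - (4 * r₀) • m) (4 * r₀) ∩ D = ∅ →
      ∀ y ∈ closure D, ⟪y - p, m⟫ ≥ -(1 / (8 * r₀)) * ‖y - p‖ ^ 2)
    -- the truncation function ρ and its derivative ρ'
    (ρ ρ' : ℝ → ℝ) (hρ_deriv : ∀ s, HasDerivAt ρ (ρ' s) s)
    (hρ_mono : MonotoneOn ρ (Set.Ici 0))
    (hρ_id : ∀ s ∈ Set.Icc (0 : ℝ) (4 * r₀ ^ 2), ρ s = s)
    (hρ_const : ∀ s ∈ Set.Ici (9 * r₀ ^ 2), ρ s = 9 * r₀ ^ 2)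
    -- φ(x) = ρ(d(x, D̄)²) with gradient 2 ρ'(d(x,D̄)²) (x − π(x)) near D̄
    (φ : EuclideanSpace ℝ (Fin d) → ℝ)
    (hφ : ∀ w, φ w = ρ (Metric.infDist w (closure D) ^ 2))
    (gradφ : EuclideanSpace ℝ (Fin d) → EuclideanSpace ℝ (Fin d))
    (hgradφ : ∀ w, HasGradientAt φ (gradφ w) w)
    (hgrad_formula : ∀ w, Metric.infDist w (closure D) < 4 * r₀ →
      gradφ w = (2 * ρ' (Metric.infDist w (closure D) ^ 2)) • (w - π w)) :
    ∀ x y : EuclideanSpace ℝ (Fin d),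
      Metric.infDist x (closure D) < 2 * r₀ → Metric.infDist y (closure D) < 2 * r₀ →
      ⟪gradφ x, x - y⟫ ≥ -2 * ρ' (Metric.infDist x (closure D) ^ 2) *
        (⟪y - π y, x - π x⟫ + (1 / (8 * r₀)) * ‖π x - π y‖ ^ 2 * ‖x - π x‖) := by
  intro x y hx hy
  have hx4 : Metric.infDist x (closure D) < 4 * r₀ := by linarith
  have hy4 : Metric.infDist y (closure D) < 4 * r₀ := by linarith
  have hd0 : 0 ≤ Metric.infDist x (closure D) := Metric.infDist_nonneg
  have hρ1 : ρ' (Metric.infDist x (closure D) ^ 2) = 1 := by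
    apply rho_deriv_one hr₀ ρ ρ' hρ_deriv hρ_id (by positivity)
    nlinarith only [hx, hd0, hr₀]
  rw [hgrad_formula x hx4, hρ1, real_inner_smul_left]
  have hiden : ⟪x - π x, x - y⟫ + ⟪y - π y, x - π x⟫
      = ‖x - π x‖^2 + ⟪x - π x, π x - π y⟫ := by
    rw [real_inner_comm (x - π x) (y - π y)]
    rw [← inner_add_right]
    have e : (x - y) + (y - π y) = (x - π x) + (π x - π y) := by abel
    rw [e, inner_add_right, real_inner_self_eq_norm_sq]
  have hkey := key_normal_ineq isClosed_closure hr₀ hπ_mem hπ_dist hπ_unique x hx4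
    (π y) (hπ_mem y hy4)
  have hsq : (0:ℝ) ≤ ‖x - π x‖^2 := sq_nonneg _
  linarith only [hiden, hkey, hsq]
end

section
/- (Maximum principle via support and submartingale property.) Let X be a continuous E-valued process with X(0) = x₀, u : E → ℝ continuous and bounded with u(X(t∧τ)) a submartingale for every stopping time τ, and u(x₀) = max u. Suppose y ∈ E lies in the topological support of the law of X(t₁) restricted to paths reachable by the process, in the sense that for every ε > 0, P(|X(t₁ ∧ τ_y) − y| < ε) > 0 where τ_y is the hitting time of the ε-ball around y. If u(y) < u(x₀), then one derives a contradiction: therefore u(y) = u(x₀) for every such y. -/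
open MeasureTheory

theorem maximum_principle_via_support
    {Ω E : Type*} {m0 : MeasurableSpace Ω} [MetricSpace E]
    (μ : Measure Ω) [IsProbabilityMeasure μ] (𝔉 : Filtration ℝ m0)
    (X : ℝ → Ω → E)
    (hXcont : ∀ ω, Continuous fun s => X s ω)
    (hXadapted : StronglyAdapted 𝔉 X)
    (x₀ : E) (hX0 : ∀ ω, X 0 ω = x₀)
    (u : E → ℝ) (hu_cont : Continuous u) (hu_bdd : ∃ Cb : ℝ, ∀ e, |u e| ≤ Cb)
    -- u(x₀) is the maximum of u
    (hmaxu : ∀ e : E, u e ≤ u x₀)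
    -- submartingale property: E[u(X(t ∧ τ))] ≥ u(x₀) for every stopping time τ
    (hsub : ∀ τ : Ω → ℝ, IsStoppingTime 𝔉 (fun ω => (τ ω : WithTop ℝ)) → (∀ ω, 0 ≤ τ ω) →
      ∀ s : ℝ, 0 ≤ s → u x₀ ≤ ∫ ω, u (X (min s (τ ω)) ω) ∂μ)
    (t₁ : ℝ) (ht₁ : 0 < t₁) (y : E)
    -- τ_y(ε) = inf{t ≥ 0 : d(X(t), y) < ε} is a stopping time
    (hstop : ∀ ε > (0 : ℝ),
      IsStoppingTime 𝔉 fun ω => ((sInf {s : ℝ | 0 ≤ s ∧ dist (X s ω) y < ε} : ℝ) : WithTop ℝ))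
    -- support condition: P(|X(t₁ ∧ τ_y) − y| < ε) > 0 for every ε > 0
    (hsupp : ∀ ε > (0 : ℝ),
      0 < μ {ω | dist
        (X (min t₁ (sInf {s : ℝ | 0 ≤ s ∧ dist (X s ω) y < ε})) ω) y < ε}) :
    u y = u x₀ := by
  by_contra hne
  have hylt : u y < u x₀ := lt_of_le_of_ne (hmaxu y) hne
  set δ : ℝ := (u x₀ - u y) / 2 with hδ
  have hδpos : 0 < δ := by simp [hδ]; linarith
  -- continuity at y
  obtain ⟨ε, hεpos, hball⟩ : ∃ ε > 0, ∀ e, dist e y < ε → u e < u x₀ - δ := by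
    have := Metric.continuousAt_iff.mp (hu_cont.continuousAt (x := y)) δ hδpos
    obtain ⟨ε, hε, h⟩ := this
    exact ⟨ε, hε, fun e he => by
      have := h he
      rw [Real.dist_eq] at this
      have : u e - u y < δ := lt_of_le_of_lt (le_abs_self _) this
      simp [hδ] at this ⊢; linarith⟩
  set τ : Ω → ℝ := fun ω => sInf {s : ℝ | 0 ≤ s ∧ dist (X s ω) y < ε} with hτdef
  have hτstop : IsStoppingTime 𝔉 (fun ω => (τ ω : WithTop ℝ)) := hstop ε hεpos
  have hτnonneg : ∀ ω, 0 ≤ τ ω :=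
    fun ω => Real.sInf_nonneg fun s hs => hs.1
  -- the stopped value
  set g : Ω → E := fun ω => X (min t₁ (τ ω)) ω with hgdef
  have hprog : ProgMeasurable 𝔉 X := hXadapted.progMeasurable_of_continuous hXcont
  have hg_sm : StronglyMeasurable g := by
    have h1 : StronglyMeasurable[𝔉 t₁] (stoppedValue X fun ω => min (τ ω) t₁) :=
      stronglyMeasurable_stoppedValue_of_le hprog (hτstop.min_const t₁)
        (fun ω => min_le_right _ _)
    have : g = stoppedValue X fun ω => min (τ ω) t₁ := by
      funext ω; simp [hgdef, stoppedValue, min_comm]; rfl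
    rw [this]
    exact h1.mono (𝔉.le t₁)
  set f : Ω → ℝ := fun ω => u (g ω) with hfdef
  obtain ⟨Cb, hCb⟩ := hu_bdd
  have hf_sm : StronglyMeasurable f := hu_cont.comp_stronglyMeasurable hg_sm
  have hf_int : Integrable f μ :=
    ⟨hf_sm.aestronglyMeasurable,
      HasFiniteIntegral.of_bounded (C := Cb) (ae_of_all _ fun ω => by
        simpa [Real.norm_eq_abs] using hCb (g ω))⟩
  set A : Set Ω := {ω | dist (g ω) y < ε} with hAdef
  have hA_meas : MeasurableSet A := by
    have : StronglyMeasurable fun ω => dist (g ω) y :=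
      (Continuous.dist continuous_id continuous_const).comp_stronglyMeasurable hg_sm
    exact this.measurable measurableSet_Iio
  have hAμ : 0 < μ A := hsupp ε hεpos
  -- comparison function
  set h : Ω → ℝ := fun ω => u x₀ - δ * A.indicator (fun _ => (1 : ℝ)) ω with hhdef
  have hh_int : Integrable h μ := by
    apply Integrable.sub (integrable_const _)
    exact ((integrable_const (1 : ℝ)).indicator hA_meas).const_mul δ
  have hfh : ∀ ω, f ω ≤ h ω := by
    intro ω
    by_cases hω : ω ∈ A
    · have := hball (g ω) hω
      simp [hhdef, Set.indicator_of_mem hω]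
      linarith
    · simp [hhdef, Set.indicator_of_notMem hω]
      exact hmaxu (g ω)
  have hμAlt : μ A ≤ 1 := prob_le_one
  have hμAfin : μ A ≠ ⊤ := (lt_of_le_of_lt hμAlt (by norm_num)).ne
  have hint_h : ∫ ω, h ω ∂μ = u x₀ - δ * (μ A).toReal := by
    rw [hhdef]
    rw [integral_sub (integrable_const _)
      (((integrable_const (1 : ℝ)).indicator hA_meas).const_mul δ)]
    rw [integral_const_mul, integral_indicator_const _ hA_meas]
    simp [mul_comm, measureReal_def]
  have key : u x₀ ≤ ∫ ω, f ω ∂μ := hsub τ hτstop hτnonneg t₁ ht₁.le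
  have hle : ∫ ω, f ω ∂μ ≤ ∫ ω, h ω ∂μ := integral_mono hf_int hh_int hfh
  have hpos : 0 < δ * (μ A).toReal :=
    mul_pos hδpos (ENNReal.toReal_pos hAμ.ne' hμAfin)
  rw [hint_h] at hle
  linarith
end
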